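/- arXiv:1706.05918 — 3 statements merged into one kernel-verified Lean document; each statement's English description precedes it below -/
import Mathlib

section
/- Let (T_n, t_n, a_n) be a Warlimont triple with log(a_n) = O(n), and let R be a positive integer. If T_{n-1} = o(T_n) and a_1·t_n = ∑_{s=0}^{R-1} β_s·T_{n-s} + O(T_{n-R}) (with β the inverse sequence of T), then t_{n-1} = o(t_n) and T_n = a_1·∑_{s=0}^{R-1} T_s·t_{n-s} + O(t_{n-R}). -/
open PowerSeries Finset

/-- The power series `∑_{k≥0} a_k x^{km}`. -/
noncomputable def innerSeries (a : ℕ → ℝ) (m : ℕ) : PowerSeries ℝ :=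
  PowerSeries.mk fun j => if m ∣ j then a (j / m) else 0

/-- The Euler-product identity `∑_{n≥0} T_n x^n = ∏_{m≥1} (∑_{k≥0} a_k x^{km})^{t_m}`,
expressed coefficientwise: the factors with `m > n` do not affect the `n`-th
coefficient, so the infinite product may be truncated at `m = n`. -/
def WarlimontEq (T : ℕ → ℝ) (t : ℕ → ℕ) (a : ℕ → ℝ) : Prop :=
  ∀ n : ℕ, PowerSeries.coeff n (PowerSeries.mk T) =
    PowerSeries.coeff n (∏ m ∈ Finset.Icc 1 n, (innerSeries a m) ^ (t m))

/-- A Warlimont triple: nonnegative sequences satisfying the Euler-product identity,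
with `T_0 = a_0 = 1`, `a_1 > 0` and the `t_m` nonnegative integers. -/
structure IsWarlimontTriple (T : ℕ → ℝ) (t : ℕ → ℕ) (a : ℕ → ℝ) : Prop where
  hT_nonneg : ∀ n, 0 ≤ T n
  ha_nonneg : ∀ n, 0 ≤ a n
  hT0 : T 0 = 1
  ha0 : a 0 = 1
  ha1 : 0 < a 1
  heq : WarlimontEq T t a


open Filter Asymptotics

theorem warlimont_two_implies_three (T : ℕ → ℝ) (t : ℕ → ℕ) (a : ℕ → ℝ) (β : ℕ → ℝ) (R : ℕ)
    (h : IsWarlimontTriple T t a) (hR : 1 ≤ R)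
    (hlog : (fun n => Real.log (a n)) =O[atTop] (fun n => (n : ℝ)))
    (hlittle : (fun n => T (n - 1)) =o[atTop] (fun n => T n))
    (hβ0 : β 0 = 1)
    (hβ : ∀ n : ℕ, 1 ≤ n → β n = -∑ s ∈ Finset.range n, β s * T (n - s))
    (h2 : (fun n => a 1 * (t n : ℝ) - ∑ s ∈ Finset.range R, β s * T (n - s)) =O[atTop]
      (fun n => T (n - R))) :
    (fun n => (t (n - 1) : ℝ)) =o[atTop] (fun n => (t n : ℝ)) ∧
      (fun n => T n - a 1 * ∑ s ∈ Finset.range R, T s * (t (n - s) : ℝ)) =O[atTop]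
        (fun n => (t (n - R) : ℝ)) := by
  obtain ⟨hTnn, hann, hT0, ha0, ha1, -⟩ := h
  set E : ℕ → ℝ := fun n => a 1 * (t n : ℝ) - ∑ s ∈ Finset.range R, β s * T (n - s) with hE
  have hsub : ∀ k : ℕ, Tendsto (fun n : ℕ => n - k) atTop atTop := fun k =>
    tendsto_sub_atTop_nat k
  have hstep : ∀ k : ℕ, (fun n => T (n - (k + 1))) =o[atTop] (fun n => T (n - k)) := by
    intro k
    have h1 := hlittle.comp_tendsto (hsub k)
    simpa [Function.comp_def, Nat.sub_sub] using h1
  have hOj : ∀ b j : ℕ, (fun n => T (n - (b + j))) =O[atTop] (fun n => T (n - b)) := by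
    intro b j
    induction j with
    | zero => simpa using (isBigO_refl (fun n => T (n - b)) atTop)
    | succ j ih =>
      exact (hstep (b + j)).isBigO.trans ih
  have hoj : ∀ b j : ℕ, 1 ≤ j → (fun n => T (n - (b + j))) =o[atTop] (fun n => T (n - b)) := by
    intro b j hj
    obtain ⟨i, rfl⟩ := Nat.exists_eq_add_of_le hj
    have h1 := (hstep (b + i)).trans_isBigO (hOj b i)
    simpa [show b + (1 + i) = b + i + 1 by ring] using h1
  have hok : ∀ k : ℕ, 1 ≤ k → (fun n => T (n - k)) =o[atTop] (fun n => T n) := by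
    intro k hk
    have h1 := hoj 0 k hk
    simp only [Nat.zero_add, Nat.sub_zero] at h1
    exact h1
  -- a 1 * t n  is equivalent to T n
  have hlo : (fun n => a 1 * (t n : ℝ) - T n) =o[atTop] (fun n => T n) := by
    have hEo : E =o[atTop] (fun n => T n) := h2.trans_isLittleO (hok R hR)
    have hsum : (fun n => ∑ s ∈ Finset.Ico 1 R, β s * T (n - s)) =o[atTop] (fun n => T n) := by
      apply Asymptotics.IsLittleO.fun_sum
      intro s hs
      have h1 := (hok s (Finset.mem_Ico.1 hs).1).const_mul_left (β s)
      simpa using h1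
    have hfe : (fun n => a 1 * (t n : ℝ) - T n)
        = fun n => E n + ∑ s ∈ Finset.Ico 1 R, β s * T (n - s) := by
      funext n
      have hsplit : ∑ s ∈ Finset.range R, β s * T (n - s)
          = β 0 * T (n - 0) + ∑ s ∈ Finset.Ico 1 R, β s * T (n - s) := by
        rw [Finset.range_eq_Ico, Finset.sum_eq_sum_Ico_succ_bot hR]
      simp only [hE]
      rw [hsplit, hβ0, Nat.sub_zero]
      ring
    rw [hfe]
    exact hEo.add hsum
  have heqvk : ∀ k : ℕ, (fun n => a 1 * ((t (n - k) : ℝ))) ~[atTop] (fun n => T (n - k)) := by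
    intro k
    have hcomp := hlo.comp_tendsto (hsub k)
    have h1 : (fun n => a 1 * (t (n - k) : ℝ) - T (n - k)) =o[atTop] (fun n => T (n - k)) := by
      simpa [Function.comp_def] using hcomp
    exact h1
  have heqv : (fun n => a 1 * (t n : ℝ)) ~[atTop] (fun n => T n) := hlo
  -- Part 1
  have part1 : (fun n => (t (n - 1) : ℝ)) =o[atTop] (fun n => (t n : ℝ)) := by
    have h4 : (fun n => a 1 * (t (n - 1) : ℝ)) =o[atTop] (fun n => a 1 * (t n : ℝ)) :=
      ((heqvk 1).isBigO.trans_isLittleO hlittle).trans_isBigO heqv.symm.isBigO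
    rwa [isLittleO_const_mul_left_iff ha1.ne', isLittleO_const_mul_right_iff ha1.ne'] at h4
  -- the convolution of T and β
  have hγ : ∀ k : ℕ, ∑ s ∈ Finset.range (k + 1), T s * β (k - s) = if k = 0 then 1 else 0 := by
    intro k
    rcases Nat.eq_zero_or_pos k with rfl | hk
    · simp [hT0, hβ0]
    · rw [if_neg hk.ne']
      have h1 : ∑ s ∈ Finset.range (k + 1), T s * β (k - s)
          = ∑ s ∈ Finset.range (k + 1), β s * T (k - s) := by
        rw [← Finset.sum_range_reflect]
        apply Finset.sum_congr rfl
        intro s hs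
        simp only [Finset.mem_range] at hs
        have e1 : k + 1 - 1 - s = k - s := by omega
        have e2 : k - (k - s) = s := by omega
        rw [e1, e2, mul_comm]
      rw [h1, Finset.sum_range_succ, Nat.sub_self, hT0, hβ k hk]
      ring
  -- key algebraic identity
  have hkey : ∀ n : ℕ,
      T n - a 1 * ∑ s ∈ Finset.range R, T s * (t (n - s) : ℝ)
      = -(∑ p ∈ (Finset.range R ×ˢ Finset.range R).filter (fun p => R ≤ p.1 + p.2),
            T p.1 * β p.2 * T (n - (p.1 + p.2)))
        - ∑ s ∈ Finset.range R, T s * E (n - s) := by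
    intro n
    have hE' : ∀ m, a 1 * (t m : ℝ) = (∑ u ∈ Finset.range R, β u * T (m - u)) + E m := by
      intro m; simp [hE]
    have step1 : a 1 * ∑ s ∈ Finset.range R, T s * (t (n - s) : ℝ)
        = (∑ s ∈ Finset.range R, ∑ u ∈ Finset.range R, T s * β u * T (n - (s + u)))
          + ∑ s ∈ Finset.range R, T s * E (n - s) := by
      rw [Finset.mul_sum, ← Finset.sum_add_distrib]
      apply Finset.sum_congr rfl
      intro s hs
      have e1 : a 1 * (T s * (t (n - s) : ℝ)) = T s * (a 1 * (t (n - s) : ℝ)) := by ring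
      rw [e1, hE' (n - s), mul_add, Finset.mul_sum]
      congr 1
      apply Finset.sum_congr rfl
      intro u hu
      rw [Nat.sub_sub]
      ring
    have step2 : (∑ s ∈ Finset.range R, ∑ u ∈ Finset.range R, T s * β u * T (n - (s + u)))
        = T n + ∑ p ∈ (Finset.range R ×ˢ Finset.range R).filter (fun p => R ≤ p.1 + p.2),
            T p.1 * β p.2 * T (n - (p.1 + p.2)) := by
      rw [← Finset.sum_product']
      rw [← Finset.sum_filter_add_sum_filter_not (Finset.range R ×ˢ Finset.range R)
            (fun p => R ≤ p.1 + p.2)]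
      rw [add_comm]
      congr 1
      have hset : (Finset.range R ×ˢ Finset.range R).filter (fun p => ¬ R ≤ p.1 + p.2)
          = (Finset.range R).biUnion (fun k => Finset.HasAntidiagonal.antidiagonal k) := by
        ext p
        simp only [Finset.mem_filter, Finset.mem_product, Finset.mem_range,
          Finset.mem_biUnion, Finset.HasAntidiagonal.mem_antidiagonal, not_le]
        constructor
        · rintro ⟨⟨h1, h2⟩, h3⟩; exact ⟨p.1 + p.2, h3, rfl⟩
        · rintro ⟨k, hk, hpk⟩; omega
      rw [hset, Finset.sum_biUnion]
      · have hfib : ∀ k ∈ Finset.range R,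
            ∑ p ∈ Finset.HasAntidiagonal.antidiagonal k, T p.1 * β p.2 * T (n - (p.1 + p.2))
            = (if k = 0 then 1 else 0) * T (n - k) := by
          intro k hk
          rw [← hγ k, Finset.sum_mul, Finset.Nat.sum_antidiagonal_eq_sum_range_succ_mk]
          apply Finset.sum_congr rfl
          intro s hs
          simp only [Finset.mem_range] at hs
          have e1 : s + (k - s) = k := by omega
          rw [e1]
        rw [Finset.sum_congr rfl hfib]
        have : ∀ k ∈ Finset.range R, (if k = 0 then (1:ℝ) else 0) * T (n - k)
            = if k = 0 then T (n - k) else 0 := by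
          intro k hk
          split <;> simp
        rw [Finset.sum_congr rfl this, Finset.sum_ite_eq' (Finset.range R) 0 (fun k => T (n - k))]
        simp [Nat.lt_of_lt_of_le Nat.zero_lt_one hR]
      · intro x hx y hy hxy
        refine Finset.disjoint_left.2 fun p hp hp' => hxy ?_
        simp only [Finset.HasAntidiagonal.mem_antidiagonal] at hp hp'
        rw [← hp, hp']
    rw [step1, step2]
    ring
  -- Part 2
  have hDO : (fun n => T n - a 1 * ∑ s ∈ Finset.range R, T s * (t (n - s) : ℝ)) =O[atTop]
      (fun n => T (n - R)) := by
    have hbig1 : (fun n => ∑ p ∈ (Finset.range R ×ˢ Finset.range R).filter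
          (fun p => R ≤ p.1 + p.2), T p.1 * β p.2 * T (n - (p.1 + p.2))) =O[atTop]
        (fun n => T (n - R)) := by
      apply Asymptotics.IsBigO.fun_sum
      intro p hp
      simp only [Finset.mem_filter] at hp
      obtain ⟨i, hi⟩ := Nat.exists_eq_add_of_le hp.2
      have h1 := (hOj R i).const_mul_left (T p.1 * β p.2)
      rw [← hi] at h1
      simpa [mul_assoc] using h1
    have hbig2 : (fun n => ∑ s ∈ Finset.range R, T s * E (n - s)) =O[atTop]
        (fun n => T (n - R)) := by
      apply Asymptotics.IsBigO.fun_sum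
      intro s hs
      have hcomp := h2.comp_tendsto (hsub s)
      have h1 : (fun n => E (n - s)) =O[atTop] (fun n => T (n - (R + s))) := by
        have e1 : ∀ n : ℕ, n - s - R = n - (R + s) := by intro n; omega
        simpa [Function.comp_def, e1] using hcomp
      exact (h1.trans (hOj R s)).const_mul_left (T s)
    have hfin := hbig1.neg_left.sub hbig2
    rw [show (fun n => T n - a 1 * ∑ s ∈ Finset.range R, T s * (t (n - s) : ℝ))
        = (fun n => -(∑ p ∈ (Finset.range R ×ˢ Finset.range R).filter (fun p => R ≤ p.1 + p.2),
            T p.1 * β p.2 * T (n - (p.1 + p.2)))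
          - ∑ s ∈ Finset.range R, T s * E (n - s)) from funext hkey]
    exact hfin
  have hTRt : (fun n => T (n - R)) =O[atTop] (fun n => (t (n - R) : ℝ)) := by
    refine (heqvk R).symm.isBigO.trans ?_
    exact ((isBigO_refl (fun n => (t (n - R) : ℝ)) atTop).const_mul_left (a 1))
  exact ⟨part1, hDO.trans hTRt⟩
end

section
/- Let (T_n, t_n, a_n) be a Warlimont triple. If t_{n-1} = o(t_n) and T_n = a_1·∑_{s=0}^{R-1} T_s·t_{n-s} + O(t_{n-R}) for a positive integer R, then ∑_{s=R}^{n-R} t_s·t_{n-s} = O(t_{n-R}). -/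
open PowerSeries Finset

namespace WarlAux

/-- All coefficients nonnegative. -/
def NNc (f : PowerSeries ℝ) : Prop := ∀ k, 0 ≤ PowerSeries.coeff k f

lemma NNc.mul {f g : PowerSeries ℝ} (hf : NNc f) (hg : NNc g) : NNc (f * g) := by
  intro k
  rw [PowerSeries.coeff_mul]
  exact Finset.sum_nonneg fun p _ => mul_nonneg (hf p.1) (hg p.2)

lemma NNc.one : NNc 1 := by
  intro k; rw [PowerSeries.coeff_one]; positivity

lemma NNc.pow {f : PowerSeries ℝ} (hf : NNc f) (e : ℕ) : NNc (f ^ e) := by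
  induction e with
  | zero => simpa using NNc.one
  | succ e ih => rw [pow_succ]; exact ih.mul hf

lemma NNc.prod {ι : Type*} {s : Finset ι} {f : ι → PowerSeries ℝ} (h : ∀ i ∈ s, NNc (f i)) :
    NNc (∏ i ∈ s, f i) :=
  Finset.prod_induction f NNc (fun _ _ => NNc.mul) NNc.one h

lemma coeff_mul_ge_sum {f g : PowerSeries ℝ} (hf : NNc f) (hg : NNc g) (n : ℕ)
    {S : Finset (ℕ × ℕ)} (hS : S ⊆ Finset.HasAntidiagonal.antidiagonal n) :
    ∑ p ∈ S, PowerSeries.coeff p.1 f * PowerSeries.coeff p.2 g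
      ≤ PowerSeries.coeff n (f * g) := by
  rw [PowerSeries.coeff_mul]
  exact Finset.sum_le_sum_of_subset_of_nonneg hS fun p _ _ => mul_nonneg (hf p.1) (hg p.2)

lemma coeff_mul_ge_single {f g : PowerSeries ℝ} (hf : NNc f) (hg : NNc g) (i j : ℕ) :
    PowerSeries.coeff i f * PowerSeries.coeff j g
      ≤ PowerSeries.coeff (i + j) (f * g) := by
  have h := coeff_mul_ge_sum hf hg (i + j) (S := {(i, j)}) (by simp)
  simpa using h

lemma coeff_mul_mono {f₁ g₁ f₂ g₂ : PowerSeries ℝ} (h1 : NNc g₁) (h2 : NNc g₂)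
    (e1 : ∀ k, PowerSeries.coeff k g₁ ≤ PowerSeries.coeff k f₁)
    (e2 : ∀ k, PowerSeries.coeff k g₂ ≤ PowerSeries.coeff k f₂) :
    ∀ k, PowerSeries.coeff k (g₁ * g₂) ≤ PowerSeries.coeff k (f₁ * f₂) := by
  intro k
  rw [PowerSeries.coeff_mul, PowerSeries.coeff_mul]
  refine Finset.sum_le_sum fun p _ => ?_
  exact mul_le_mul (e1 p.1) (e2 p.2) (h2 p.2) (le_trans (h1 p.1) (e1 p.1))

lemma coeff_pow_mono {f g : PowerSeries ℝ} (hg : NNc g)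
    (e12 : ∀ k, PowerSeries.coeff k g ≤ PowerSeries.coeff k f) (e : ℕ) :
    ∀ k, PowerSeries.coeff k (g ^ e) ≤ PowerSeries.coeff k (f ^ e) := by
  induction e with
  | zero => simp
  | succ e ih =>
    rw [pow_succ, pow_succ]
    exact coeff_mul_mono (hg.pow e) hg ih e12

lemma coeff_binom (c : ℝ) (m e j : ℕ) (hm : 1 ≤ m) :
    PowerSeries.coeff (m * j) ((1 + PowerSeries.C c * X ^ m) ^ e)
      = (e.choose j : ℝ) * c ^ j := by
  rw [add_comm, add_pow, map_sum]
  have key : ∀ k ∈ Finset.range (e + 1),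
      PowerSeries.coeff (m * j) ((PowerSeries.C c * X ^ m) ^ k * 1 ^ (e - k) * (e.choose k : PowerSeries ℝ))
        = if k = j then (e.choose k : ℝ) * c ^ k else 0 := by
    intro k _
    have hrw : (PowerSeries.C c * X ^ m) ^ k * 1 ^ (e - k) * (e.choose k : PowerSeries ℝ)
        = PowerSeries.C ((e.choose k : ℝ) * c ^ k) * X ^ (m * k) := by
      rw [← map_natCast (PowerSeries.C) (e.choose k), mul_pow, ← map_pow, ← pow_mul, map_mul]
      ring
    rw [hrw, PowerSeries.coeff_C_mul, PowerSeries.coeff_X_pow]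
    by_cases hkj : k = j
    · subst hkj; simp
    · rw [if_neg (fun hc => hkj (Nat.eq_of_mul_eq_mul_left hm hc).symm), if_neg hkj, mul_zero]
  rw [Finset.sum_congr rfl key, Finset.sum_ite_eq' (Finset.range (e + 1)) j
    (fun k => (e.choose k : ℝ) * c ^ k)]
  by_cases hj : j ∈ Finset.range (e + 1)
  · rw [if_pos hj]
  · rw [if_neg hj, Nat.choose_eq_zero_of_lt (by simpa using hj)]
    simp

variable {a : ℕ → ℝ} {t : ℕ → ℕ}

/-- The factor `(∑ a_k x^{km})^{t m}`. -/
noncomputable def Qf (a : ℕ → ℝ) (t : ℕ → ℕ) (m : ℕ) : PowerSeries ℝ :=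
  innerSeries a m ^ t m

lemma NNc_inner (ha : ∀ n, 0 ≤ a n) (m : ℕ) : NNc (innerSeries a m) := by
  intro k
  rw [innerSeries, coeff_mk]
  split
  · exact ha _
  · exact le_rfl

lemma NNc_Q (ha : ∀ n, 0 ≤ a n) (m : ℕ) : NNc (Qf a t m) :=
  (NNc_inner ha m).pow _

lemma coeff_inner_ge (ha : ∀ n, 0 ≤ a n) (ha0 : a 0 = 1) {m : ℕ} (hm : 1 ≤ m) (k : ℕ) :
    PowerSeries.coeff k (1 + PowerSeries.C (a 1) * X ^ m) ≤
      PowerSeries.coeff k (innerSeries a m) := by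
  rw [map_add, PowerSeries.coeff_one, PowerSeries.coeff_C_mul, PowerSeries.coeff_X_pow,
    innerSeries, coeff_mk]
  by_cases h0 : k = 0
  · subst h0
    rw [if_pos rfl, if_neg (by omega), if_pos (dvd_zero m), Nat.zero_div, ha0, mul_zero, add_zero]
  · rw [if_neg h0]
    by_cases hkm : k = m
    · subst hkm
      rw [if_pos rfl, if_pos dvd_rfl, Nat.div_self hm, mul_one, zero_add]
    · rw [if_neg hkm, mul_zero, add_zero]
      split
      · exact ha _
      · exact le_rfl

lemma NNc_binom (ha : ∀ n, 0 ≤ a n) {m : ℕ} (hm : 1 ≤ m) : NNc (1 + PowerSeries.C (a 1) * X ^ m) := by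
  intro k
  rw [map_add, PowerSeries.coeff_one, PowerSeries.coeff_C_mul, PowerSeries.coeff_X_pow]
  have := ha 1
  split <;> split <;> simp_all

lemma coeff_Q_ge_choose (ha : ∀ n, 0 ≤ a n) (ha0 : a 0 = 1) {m : ℕ} (hm : 1 ≤ m) (j : ℕ) :
    ((t m).choose j : ℝ) * a 1 ^ j ≤ PowerSeries.coeff (m * j) (Qf a t m) := by
  rw [← coeff_binom (a 1) m (t m) j hm]
  exact coeff_pow_mono (NNc_binom ha hm) (coeff_inner_ge ha ha0 hm) (t m) (m * j)

lemma coeff_Q_self (ha : ∀ n, 0 ≤ a n) (ha0 : a 0 = 1) {m : ℕ} (hm : 1 ≤ m) :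
    (t m : ℝ) * a 1 ≤ PowerSeries.coeff m (Qf a t m) := by
  have h := coeff_Q_ge_choose (t := t) ha ha0 hm 1
  simpa using h

lemma coeff_Q_double (ha : ∀ n, 0 ≤ a n) (ha0 : a 0 = 1) {m : ℕ} (hm : 1 ≤ m) :
    ((t m).choose 2 : ℝ) * a 1 ^ 2 ≤ PowerSeries.coeff (2 * m) (Qf a t m) := by
  have h := coeff_Q_ge_choose (t := t) ha ha0 hm 2
  rwa [mul_comm m 2] at h

lemma coeff_zero_Q (ha0 : a 0 = 1) (m : ℕ) : PowerSeries.coeff 0 (Qf a t m) = 1 := by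
  rw [Qf, PowerSeries.coeff_zero_eq_constantCoeff, map_pow]
  have : constantCoeff (innerSeries a m) = 1 := by
    rw [innerSeries, ← PowerSeries.coeff_zero_eq_constantCoeff, coeff_mk,
      if_pos (dvd_zero m), Nat.zero_div, ha0]
  rw [this, one_pow]

lemma coeff_zero_prodQ (ha0 : a 0 = 1) (s : Finset ℕ) :
    PowerSeries.coeff 0 (∏ m ∈ s, Qf a t m) = 1 := by
  rw [PowerSeries.coeff_zero_eq_constantCoeff, map_prod]
  exact Finset.prod_eq_one fun m _ => by
    rw [← PowerSeries.coeff_zero_eq_constantCoeff]; exact coeff_zero_Q ha0 m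

lemma coeff_prodQ_ge (ha : ∀ n, 0 ≤ a n) (ha0 : a 0 = 1) (s : Finset ℕ) (k : ℕ) (hk : k ∈ s)
    (d : ℕ) : PowerSeries.coeff d (Qf a t k) ≤ PowerSeries.coeff d (∏ m ∈ s, Qf a t m) := by
  rw [← Finset.mul_prod_erase s _ hk]
  have h := coeff_mul_ge_single (NNc_Q (t := t) ha k)
    (NNc.prod (s := s.erase k) (f := Qf a t) fun i _ => NNc_Q ha i) d 0
  rwa [add_zero, coeff_zero_prodQ ha0, mul_one] at h

end WarlAux

open Filter Asymptotics

open Filter Asymptotics WarlAux in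

theorem warlimont_three_implies_four (T : ℕ → ℝ) (t : ℕ → ℕ) (a : ℕ → ℝ) (R : ℕ)
    (h : IsWarlimontTriple T t a) (hR : 1 ≤ R)
    (hlittle : (fun n => (t (n - 1) : ℝ)) =o[atTop] (fun n => (t n : ℝ)))
    (h3 : (fun n => T n - a 1 * ∑ s ∈ Finset.range R, T s * (t (n - s) : ℝ)) =O[atTop]
      (fun n => (t (n - R) : ℝ))) :
    (fun n => ∑ s ∈ Finset.Icc R (n - R), (t s : ℝ) * (t (n - s) : ℝ)) =O[atTop]
      (fun n => (t (n - R) : ℝ)) := by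
  obtain ⟨hTnn, hann, hT0, ha0, hα, heq⟩ := h
  set α := a 1 with hαdef
  -- eventual monotonicity of t
  obtain ⟨Nm, hNm⟩ : ∃ N : ℕ, ∀ n, N ≤ n → (t n : ℝ) ≤ t (n + 1) := by
    have h1 := hlittle.def one_pos
    rw [eventually_atTop] at h1
    obtain ⟨N, hN⟩ := h1
    refine ⟨N, fun n hn => ?_⟩
    have h2 := hN (n + 1) (by omega)
    simpa [Real.norm_natCast] using h2
  have hmono : ∀ k d : ℕ, Nm ≤ k → (t k : ℝ) ≤ t (k + d) := by
    intro k d hk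
    induction d with
    | zero => simp
    | succ d ih => exact le_trans ih (hNm (k + d) (by omega))
  obtain ⟨Cb, hCb⟩ := h3.bound
  rw [eventually_atTop] at hCb
  obtain ⟨N1, hN1⟩ := hCb
  rw [Asymptotics.isBigO_iff]
  refine ⟨2 / α ^ 2 * (Cb + α ^ 2 / 2), ?_⟩
  rw [eventually_atTop]
  refine ⟨max N1 (2 * R + 2 * Nm + 2), fun n hn => ?_⟩
  have hn1 : N1 ≤ n := le_trans (le_max_left _ _) hn
  have hnR : 2 * R + 2 * Nm + 2 ≤ n := le_trans (le_max_right _ _) hn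
  set Hf := n / 2 with hHf
  -- the four partial products
  set Cp := ∏ m ∈ Finset.Ioc 0 (R - 1), Qf a t m with hCpd
  set Bp := ∏ m ∈ Finset.Ioc (n - R) n, Qf a t m with hBpd
  set A1 := ∏ m ∈ Finset.Ioc (R - 1) Hf, Qf a t m with hA1d
  set A2 := ∏ m ∈ Finset.Ioc Hf (n - R), Qf a t m with hA2d
  have hNCp : NNc Cp := NNc.prod fun i _ => NNc_Q hann i
  have hNBp : NNc Bp := NNc.prod fun i _ => NNc_Q hann i
  have hNA1 : NNc A1 := NNc.prod fun i _ => NNc_Q hann i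
  have hNA2 : NNc A2 := NNc.prod fun i _ => NNc_Q hann i
  have hicc : ∀ N : ℕ, (∏ m ∈ Finset.Icc 1 N, innerSeries a m ^ t m)
      = ∏ m ∈ Finset.Ioc 0 N, Qf a t m := by
    intro N
    have e : Finset.Icc 1 N = Finset.Ioc 0 N := by ext x; simp [Nat.lt_iff_add_one_le]
    rw [e]; rfl
  have hTn : T n = PowerSeries.coeff n ((Cp * Bp) * (A1 * A2)) := by
    have h0 := heq n
    rw [coeff_mk, hicc n] at h0
    rw [h0]
    congr 1
    have e1 : Cp * A1 = ∏ m ∈ Finset.Ioc 0 Hf, Qf a t m :=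
      Finset.prod_Ioc_consecutive _ (by omega) (by omega)
    have e2 : (∏ m ∈ Finset.Ioc 0 Hf, Qf a t m) * A2 = ∏ m ∈ Finset.Ioc 0 (n - R), Qf a t m :=
      Finset.prod_Ioc_consecutive _ (by omega) (by omega)
    have e3 : (∏ m ∈ Finset.Ioc 0 (n - R), Qf a t m) * Bp = ∏ m ∈ Finset.Ioc 0 n, Qf a t m :=
      Finset.prod_Ioc_consecutive _ (by omega) (by omega)
    rw [← e3, ← e2, ← e1]; ring
  -- step 1 : T n dominates the two key coefficients
  have hkey : PowerSeries.coeff n (Cp * Bp) + PowerSeries.coeff n (A1 * A2) ≤ T n := by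
    rw [hTn]
    have hsub : ({(n, 0), (0, n)} : Finset (ℕ × ℕ)) ⊆ Finset.HasAntidiagonal.antidiagonal n := by
      intro p hp
      simp only [Finset.mem_insert, Finset.mem_singleton] at hp
      rcases hp with rfl | rfl <;> simp [Finset.mem_antidiagonal]
    have h2 := coeff_mul_ge_sum (hNCp.mul hNBp) (hNA1.mul hNA2) n hsub
    rw [Finset.sum_pair (by simp; omega)] at h2
    have hcc : ∀ s : Finset ℕ, constantCoeff (∏ m ∈ s, Qf a t m) = 1 := fun s => by
      have hx := coeff_zero_prodQ (t := t) ha0 s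
      rwa [PowerSeries.coeff_zero_eq_constantCoeff] at hx
    have hz1 : PowerSeries.coeff 0 (Cp * Bp) = 1 := by
      rw [PowerSeries.coeff_zero_eq_constantCoeff, map_mul, hCpd, hBpd, hcc, hcc, mul_one]
    have hz2 : PowerSeries.coeff 0 (A1 * A2) = 1 := by
      rw [PowerSeries.coeff_zero_eq_constantCoeff, map_mul, hA1d, hA2d, hcc, hcc, mul_one]
    rw [hz1, hz2, mul_one, one_mul] at h2
    exact h2
  -- step 2 : lower bound for coeff n (Cp * Bp)
  have hU : α * ∑ s ∈ Finset.range R, T s * (t (n - s) : ℝ)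
      ≤ PowerSeries.coeff n (Cp * Bp) := by
    have hCge : ∀ s, s < R → T s ≤ PowerSeries.coeff s Cp := by
      intro s hs
      have hTs : T s = PowerSeries.coeff s (∏ m ∈ Finset.Ioc 0 s, Qf a t m) := by
        have h0 := heq s
        rw [coeff_mk, hicc s] at h0
        exact h0
      have hsplit : (∏ m ∈ Finset.Ioc 0 s, Qf a t m) * (∏ m ∈ Finset.Ioc s (R - 1), Qf a t m)
          = Cp := Finset.prod_Ioc_consecutive _ (by omega) (by omega)
      have h2 := coeff_mul_ge_single (f := ∏ m ∈ Finset.Ioc 0 s, Qf a t m)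
        (g := ∏ m ∈ Finset.Ioc s (R - 1), Qf a t m)
        (NNc.prod fun i _ => NNc_Q hann i) (NNc.prod fun i _ => NNc_Q hann i) s 0
      rw [add_zero, coeff_zero_prodQ ha0, mul_one, hsplit] at h2
      rw [hTs]; exact h2
    have hBge : ∀ s, s < R → α * (t (n - s) : ℝ) ≤ PowerSeries.coeff (n - s) Bp := by
      intro s hs
      have h1 := coeff_Q_self (t := t) hann ha0 (m := n - s) (by omega)
      have h2 := coeff_prodQ_ge (t := t) hann ha0 (Finset.Ioc (n - R) n) (n - s)
        (by simp only [Finset.mem_Ioc]; omega) (n - s)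
      calc α * (t (n - s) : ℝ) = (t (n - s) : ℝ) * α := by ring
        _ ≤ _ := le_trans h1 h2
    have hsub : (Finset.range R).image (fun s => (s, n - s)) ⊆ Finset.HasAntidiagonal.antidiagonal n := by
      intro p hp
      rw [Finset.mem_image] at hp
      obtain ⟨s, hs, rfl⟩ := hp
      rw [Finset.HasAntidiagonal.mem_antidiagonal]
      simp only [Finset.mem_range] at hs
      omega
    have h2 := coeff_mul_ge_sum hNCp hNBp n hsub
    rw [Finset.sum_image (fun x _ y _ hxy => congrArg Prod.fst hxy)] at h2
    refine le_trans ?_ h2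
    rw [Finset.mul_sum]
    refine Finset.sum_le_sum fun s hs => ?_
    have hs' : s < R := by simpa using hs
    calc α * (T s * (t (n - s) : ℝ)) = T s * (α * (t (n - s) : ℝ)) := by ring
      _ ≤ PowerSeries.coeff s Cp * PowerSeries.coeff (n - s) Bp :=
        mul_le_mul (hCge s hs') (hBge s hs') (by positivity)
          (le_trans (hTnn s) (hCge s hs'))
  -- step 3 : lower bound for coeff n (A1 * A2)
  set D : ℝ := if n = 2 * Hf then ((t Hf).choose 2 : ℝ) * α ^ 2 else 0 with hDd
  have hV : α ^ 2 * (∑ s ∈ Finset.Ioc (R - 1) (n - Hf - 1), (t s : ℝ) * (t (n - s) : ℝ)) + D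
      ≤ PowerSeries.coeff n (A1 * A2) := by
    have hnotmem : (n, 0) ∉ (Finset.Ioc (R - 1) (n - Hf - 1)).image (fun s => (s, n - s)) := by
      rw [Finset.mem_image]
      rintro ⟨s, hs, hhs⟩
      simp only [Finset.mem_Ioc] at hs
      have : s = n := congrArg Prod.fst hhs
      omega
    have hsub : insert (n, 0) ((Finset.Ioc (R - 1) (n - Hf - 1)).image (fun s => (s, n - s)))
        ⊆ Finset.HasAntidiagonal.antidiagonal n := by
      intro p hp
      rw [Finset.mem_insert, Finset.mem_image] at hp
      rcases hp with rfl | ⟨s, hs, rfl⟩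
      · simp [Finset.mem_antidiagonal]
      · rw [Finset.HasAntidiagonal.mem_antidiagonal]
        simp only [Finset.mem_Ioc] at hs
        omega
    have h2 := coeff_mul_ge_sum hNA1 hNA2 n hsub
    rw [Finset.sum_insert hnotmem,
      Finset.sum_image (fun x _ y _ hxy => congrArg Prod.fst hxy)] at h2
    refine le_trans ?_ h2
    have hA2z : PowerSeries.coeff 0 A2 = 1 := coeff_zero_prodQ ha0 _
    rw [hA2z, mul_one]
    have hdiag : D ≤ PowerSeries.coeff n A1 := by
      by_cases hpar : n = 2 * Hf
      · rw [hDd, if_pos hpar]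
        have h1 := coeff_Q_double (t := t) hann ha0 (m := Hf) (by omega)
        have h2' := coeff_prodQ_ge (t := t) hann ha0 (Finset.Ioc (R - 1) Hf) Hf
          (by simp only [Finset.mem_Ioc]; omega) (2 * Hf)
        rw [← hpar] at h1 h2'
        exact le_trans h1 h2'
      · rw [hDd, if_neg hpar]
        exact hNA1 n
    have hterms : α ^ 2 * (∑ s ∈ Finset.Ioc (R - 1) (n - Hf - 1), (t s : ℝ) * (t (n - s) : ℝ))
        ≤ ∑ s ∈ Finset.Ioc (R - 1) (n - Hf - 1),
            PowerSeries.coeff s A1 * PowerSeries.coeff (n - s) A2 := by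
      rw [Finset.mul_sum]
      refine Finset.sum_le_sum fun s hs => ?_
      simp only [Finset.mem_Ioc] at hs
      have hA1s : (t s : ℝ) * α ≤ PowerSeries.coeff s A1 :=
        le_trans (coeff_Q_self (t := t) hann ha0 (by omega))
          (coeff_prodQ_ge (t := t) hann ha0 _ s (by simp only [Finset.mem_Ioc]; omega) s)
      have hA2s : (t (n - s) : ℝ) * α ≤ PowerSeries.coeff (n - s) A2 :=
        le_trans (coeff_Q_self (t := t) hann ha0 (by omega))
          (coeff_prodQ_ge (t := t) hann ha0 _ (n - s) (by simp only [Finset.mem_Ioc]; omega)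
            (n - s))
      calc α ^ 2 * ((t s : ℝ) * (t (n - s) : ℝ))
          = ((t s : ℝ) * α) * ((t (n - s) : ℝ) * α) := by ring
        _ ≤ _ := mul_le_mul hA1s hA2s (by positivity) (le_trans (by positivity) hA1s)
    linarith [hdiag, hterms]
  -- step 4 : splitting of the target sum
  have hSsplit : ∑ s ∈ Finset.Icc R (n - R), (t s : ℝ) * (t (n - s) : ℝ)
      ≤ 2 * ∑ s ∈ Finset.Ioc (R - 1) (n - Hf - 1), (t s : ℝ) * (t (n - s) : ℝ)
        + (if n = 2 * Hf then (t Hf : ℝ) * (t Hf : ℝ) else 0) := by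
    have e0 : Finset.Icc R (n - R) = Finset.Ioc (R - 1) (n - R) := by
      ext x; simp only [Finset.mem_Icc, Finset.mem_Ioc]; omega
    have e1 : (∑ s ∈ Finset.Ioc (R - 1) (n - Hf - 1), (t s : ℝ) * (t (n - s) : ℝ))
        + ∑ s ∈ Finset.Ioc (n - Hf - 1) (n - R), (t s : ℝ) * (t (n - s) : ℝ)
        = ∑ s ∈ Finset.Ioc (R - 1) (n - R), (t s : ℝ) * (t (n - s) : ℝ) :=
      Finset.sum_Ioc_consecutive _ (by omega) (by omega)
    have e2 : ∑ s ∈ Finset.Ioc (n - Hf - 1) (n - R), (t s : ℝ) * (t (n - s) : ℝ)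
        = ∑ s ∈ Finset.Ioc (R - 1) Hf, (t s : ℝ) * (t (n - s) : ℝ) := by
      refine Finset.sum_nbij' (i := fun s => n - s) (j := fun s => n - s) ?_ ?_ ?_ ?_ ?_
      · intro x hx; simp only [Finset.mem_Ioc] at *; omega
      · intro x hx; simp only [Finset.mem_Ioc] at *; omega
      · intro x hx; simp only [Finset.mem_Ioc] at hx; show n - (n - x) = x; omega
      · intro x hx; simp only [Finset.mem_Ioc] at hx; show n - (n - x) = x; omega
      · intro x hx
        simp only [Finset.mem_Ioc] at hx
        rw [show n - (n - x) = x from by omega]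
        ring
    have e3 : ∑ s ∈ Finset.Ioc (R - 1) Hf, (t s : ℝ) * (t (n - s) : ℝ)
        = (∑ s ∈ Finset.Ioc (R - 1) (n - Hf - 1), (t s : ℝ) * (t (n - s) : ℝ))
          + ∑ s ∈ Finset.Ioc (n - Hf - 1) Hf, (t s : ℝ) * (t (n - s) : ℝ) :=
      (Finset.sum_Ioc_consecutive _ (by omega) (by omega)).symm
    have e4 : ∑ s ∈ Finset.Ioc (n - Hf - 1) Hf, (t s : ℝ) * (t (n - s) : ℝ)
        = (if n = 2 * Hf then (t Hf : ℝ) * (t Hf : ℝ) else 0) := by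
      by_cases hpar : n = 2 * Hf
      · rw [if_pos hpar, show Finset.Ioc (n - Hf - 1) Hf = {Hf} from by
          ext x; simp only [Finset.mem_Ioc, Finset.mem_singleton]; omega,
          Finset.sum_singleton, show n - Hf = Hf from by omega]
      · rw [if_neg hpar, show Finset.Ioc (n - Hf - 1) Hf = ∅ from by
          ext x; simp only [Finset.mem_Ioc, Finset.notMem_empty, iff_false]; omega,
          Finset.sum_empty]
    rw [e0, ← e1, e2, e3, e4]
    linarith
  -- step 5 : the h3 bound
  have hbb : T n - α * ∑ s ∈ Finset.range R, T s * (t (n - s) : ℝ) ≤ Cb * (t (n - R) : ℝ) := by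
    have h1 := hN1 n hn1
    simp only [Real.norm_eq_abs] at h1
    rw [abs_of_nonneg (show (0:ℝ) ≤ (t (n - R) : ℝ) by positivity)] at h1
    exact le_trans (le_abs_self _) h1
  -- step 6 : diagonal bound
  have hth : (t Hf : ℝ) ≤ (t (n - R) : ℝ) := by
    have h1 := hmono Hf ((n - R) - Hf) (by omega)
    rwa [show Hf + ((n - R) - Hf) = n - R from by omega] at h1
  have hDge : α ^ 2 / 2 * (if n = 2 * Hf then (t Hf : ℝ) * (t Hf : ℝ) else 0)
      - α ^ 2 / 2 * (t (n - R) : ℝ) ≤ D := by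
    by_cases hpar : n = 2 * Hf
    · rw [hDd, if_pos hpar, if_pos hpar, Nat.cast_choose_two]
      have hnn : (0:ℝ) ≤ α ^ 2 := sq_nonneg α
      nlinarith [mul_nonneg hnn (sub_nonneg.mpr hth)]
    · rw [hDd, if_neg hpar, if_neg hpar]
      have : (0:ℝ) ≤ α ^ 2 / 2 * (t (n - R) : ℝ) := by positivity
      linarith
  -- step 7 : assemble
  have hchain : α ^ 2 * (∑ s ∈ Finset.Ioc (R - 1) (n - Hf - 1), (t s : ℝ) * (t (n - s) : ℝ)) + D
      ≤ Cb * (t (n - R) : ℝ) := by linarith [hkey, hU, hV, hbb]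
  have hm1 : α ^ 2 / 2 * (∑ s ∈ Finset.Icc R (n - R), (t s : ℝ) * (t (n - s) : ℝ))
      ≤ α ^ 2 / 2 * (2 * ∑ s ∈ Finset.Ioc (R - 1) (n - Hf - 1), (t s : ℝ) * (t (n - s) : ℝ)
        + (if n = 2 * Hf then (t Hf : ℝ) * (t Hf : ℝ) else 0)) :=
    mul_le_mul_of_nonneg_left hSsplit (by positivity)
  have main : α ^ 2 / 2 * (∑ s ∈ Finset.Icc R (n - R), (t s : ℝ) * (t (n - s) : ℝ))
      ≤ (Cb + α ^ 2 / 2) * (t (n - R) : ℝ) := by linarith [hm1, hDge, hchain]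
  have hZnn : (0:ℝ) ≤ ∑ s ∈ Finset.Icc R (n - R), (t s : ℝ) * (t (n - s) : ℝ) :=
    Finset.sum_nonneg fun s _ => by positivity
  rw [Real.norm_eq_abs, Real.norm_eq_abs, abs_of_nonneg hZnn,
    abs_of_nonneg (by positivity : (0:ℝ) ≤ (t (n - R) : ℝ))]
  have hα2 : (0:ℝ) < α ^ 2 := by positivity
  have hrw : ∑ s ∈ Finset.Icc R (n - R), (t s : ℝ) * (t (n - s) : ℝ)
      = 2 / α ^ 2 * (α ^ 2 / 2 * ∑ s ∈ Finset.Icc R (n - R), (t s : ℝ) * (t (n - s) : ℝ)) := by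
    field_simp
  rw [hrw, mul_assoc]
  exact mul_le_mul_of_nonneg_left main (by positivity)
end

section
/- Let (T_n, t_n, a_n) be a Warlimont triple satisfying, for some integer R > 2: T_{n-1} = o(T_n) and ∑_{s=R}^{n-R} T_s·T_{n-s} = O(T_{n-R}). Then for every positive integer R' ≤ R, ∑_{s=R'}^{n-R'} T_s·T_{n-s} = O(T_{n-R'}). -/
open PowerSeries Finset

open Filter Asymptotics

theorem warlimont_axiom_monotone (T : ℕ → ℝ) (t : ℕ → ℕ) (a : ℕ → ℝ) (R : ℕ)
    (h : IsWarlimontTriple T t a) (hR : 2 < R)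
    (hlittle : (fun n => T (n - 1)) =o[atTop] (fun n => T n))
    (hsum : (fun n => ∑ s ∈ Finset.Icc R (n - R), T s * T (n - s)) =O[atTop]
      (fun n => T (n - R))) :
    ∀ R' : ℕ, 1 ≤ R' → R' ≤ R →
      (fun n => ∑ s ∈ Finset.Icc R' (n - R'), T s * T (n - s)) =O[atTop]
        (fun n => T (n - R')) := by
  intro R' hR'1 hR'R
  -- monotonicity in the shift
  have hmono : ∀ j : ℕ, R' ≤ j →
      (fun n => T (n - j)) =O[atTop] (fun n => T (n - R')) := by
    intro j hj
    induction j with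
    | zero =>
      have : R' = 0 := Nat.le_zero.mp hj
      simpa [this] using isBigO_refl (fun n => T n) atTop
    | succ k ih =>
      rcases Nat.lt_or_ge R' (k + 1) with hlt | hge
      · have hk : R' ≤ k := Nat.lt_succ_iff.mp hlt
        have h1 : (fun n => T (n - (k + 1))) =O[atTop] (fun n => T (n - k)) := by
          have htend : Tendsto (fun n : ℕ => n - k) atTop atTop :=
            tendsto_sub_atTop_nat k
        -- compose the little-o with shift
          have := (hlittle.isBigO).comp_tendsto htend
          simpa [Function.comp_def, Nat.sub_sub] using this
        exact h1.trans (ih hk)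
      · have : R' = k + 1 := le_antisymm hj hge
        rw [this]
  -- eventual decomposition of the sum
  have hsplit : (fun n => ∑ s ∈ Finset.Icc R' (n - R'), T s * T (n - s)) =ᶠ[atTop]
      (fun n => (∑ s ∈ Finset.Icc R (n - R), T s * T (n - s)) +
        ((∑ s ∈ Finset.Ico R' R, T s * T (n - s)) +
         (∑ u ∈ Finset.Ico R' R, T (n - u) * T u))) := by
    filter_upwards [eventually_ge_atTop (2 * R)] with n hn
    have hA : R' ≤ R := hR'R
    have hB : R ≤ n - R + 1 := by omega
    have hC : n - R + 1 ≤ n - R' + 1 := by omega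
    have hIcc1 : Finset.Icc R' (n - R') = Finset.Ico R' (n - R' + 1) :=
      (Finset.Ico_add_one_right_eq_Icc ..).symm
    have hIcc2 : Finset.Icc R (n - R) = Finset.Ico R (n - R + 1) :=
      (Finset.Ico_add_one_right_eq_Icc ..).symm
    rw [hIcc1, hIcc2,
      ← Finset.sum_Ico_consecutive _ hA (le_trans hB hC),
      ← Finset.sum_Ico_consecutive _ hB hC]
    have hre : ∑ s ∈ Finset.Ico (n - R + 1) (n - R' + 1), T s * T (n - s)
        = ∑ u ∈ Finset.Ico R' R, T (n - u) * T u := by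
      apply Finset.sum_nbij' (fun s => n - s) (fun u => n - u)
      · intro s hs
        simp only [Finset.mem_Ico] at hs ⊢
        omega
      · intro u hu
        simp only [Finset.mem_Ico] at hu ⊢
        omega
      · intro s hs
        simp only [Finset.mem_Ico] at hs
        omega
      · intro u hu
        simp only [Finset.mem_Ico] at hu
        omega
      · intro s hs
        simp only [Finset.mem_Ico] at hs
        have : n - (n - s) = s := by omega
        rw [this]
    rw [hre]
    ring
  refine hsplit.trans_isBigO ?_
  have hmid : (fun n => ∑ s ∈ Finset.Icc R (n - R), T s * T (n - s)) =O[atTop]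
      (fun n => T (n - R')) := hsum.trans (hmono R hR'R)
  have hlow : (fun n => ∑ s ∈ Finset.Ico R' R, T s * T (n - s)) =O[atTop]
      (fun n => T (n - R')) := by
    apply Asymptotics.IsBigO.fun_sum
    intro s hs
    have hs' : R' ≤ s := (Finset.mem_Ico.mp hs).1
    exact (hmono s hs').const_mul_left (T s)
  have hhigh : (fun n => ∑ u ∈ Finset.Ico R' R, T (n - u) * T u) =O[atTop]
      (fun n => T (n - R')) := by
    apply Asymptotics.IsBigO.fun_sum
    intro u hu
    have hu' : R' ≤ u := (Finset.mem_Ico.mp hu).1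
    simpa [mul_comm] using (hmono u hu').const_mul_left (T u)
  exact hmid.add (hlow.add hhigh)
end
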